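/- Let α = (α_1,…,α_n), β = (β_1,…,β_n) be tuples of real numbers, A = e^{2πiα_{i₀}} for some i₀, m_A = #{i : e^{2πiα_i} = A}, and 0 ≤ r < m_A. Then for every w with Re w < 0, the analytic continuation of g_{A,r} once counterclockwise around 0 satisfies g_{A,r}(w + 2πi) = A · Σ_{p=0}^r binom(r,p) · g_{A,p}(w). Consequently, in the basis S_{A_j,r}, the local monodromy of the hypergeometric equation around 0 is the transposed block-diagonal matrix D_{A,m_A}^t. -/

import Mathlib

open Complex Filter Set Finset
open scoped Real

noncomputable section

/-- The balanced gamma product `𝚪_{α,β}(s)`. -/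
def gammaProd {n : ℕ} (α β : Fin n → ℂ) (s : ℂ) : ℂ :=
  (∏ i, (Complex.Gamma (s - α i + 1))⁻¹) * ∏ i, (Complex.Gamma (-s + β i + 1))⁻¹

/-- The local solution `g_{A,r}(w) = Σ_{l≥0} (2πi)^{-r} (d/dt)^r [𝚪_{α,β}(l+t)e^{(l+t)w}]|_{t=ν}`
of the hypergeometric equation at `0`, in the exponential coordinate `z = e^w`. -/
def gA {n : ℕ} (α β : Fin n → ℝ) (ν : ℝ) (r : ℕ) (w : ℂ) : ℂ :=
  ∑' l : ℕ, ((2 * (π : ℂ) * Complex.I) ^ r)⁻¹ *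
    iteratedDeriv r
      (fun t : ℂ =>
        gammaProd (fun i => (α i : ℂ)) (fun i => (β i : ℂ)) ((l : ℂ) + t) *
          Complex.exp (((l : ℂ) + t) * w)) (ν : ℂ)

open Metric Filter
open scoped NNReal Topology

/-- Cauchy estimate on the unit circle for entire functions. -/
lemma cauchy_est (f : ℂ → ℂ) (hf : Differentiable ℂ f) (c : ℂ) (p : ℕ) (M : ℝ)
    (hM : ∀ t ∈ sphere c (1:ℝ), ‖f t‖ ≤ M) :
    ‖iteratedDeriv p f c‖ ≤ p.factorial * M := by
  have h : HasFPowerSeriesOnBall f (cauchyPowerSeries f c ((1:ℝ≥0):ℝ)) c ⊤ :=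
    hf.hasFPowerSeriesOnBall c (R := 1) one_pos
  have h1 : iteratedDeriv p f c
      = p.factorial • (cauchyPowerSeries f c ((1:ℝ≥0):ℝ)) p (fun _ => (1:ℂ)) := by
    rw [iteratedDeriv_eq_iteratedFDeriv, ← h.factorial_smul 1]
  have hMnn : 0 ≤ M := le_trans (norm_nonneg _) (hM (c+1) (by simp))
  have hco : ((1:ℝ≥0):ℝ) = (1:ℝ) := NNReal.coe_one
  rw [hco] at h1
  have hint : (∫ θ : ℝ in (0)..2 * Real.pi, ‖f (circleMap c 1 θ)‖) ≤ 2 * Real.pi * M := by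
    have hb : ∀ θ : ℝ, ‖‖f (circleMap c 1 θ)‖‖ ≤ M := fun θ => by
      simpa using hM _ (circleMap_mem_sphere c one_pos.le θ)
    calc (∫ θ : ℝ in (0)..2 * Real.pi, ‖f (circleMap c 1 θ)‖)
        ≤ ‖∫ θ : ℝ in (0)..2 * Real.pi, ‖f (circleMap c 1 θ)‖‖ := le_abs_self _
      _ ≤ M * |2 * Real.pi - 0| :=
          intervalIntegral.norm_integral_le_of_norm_le_const (fun θ _ => hb θ)
      _ = 2 * Real.pi * M := by rw [sub_zero, abs_of_pos Real.two_pi_pos]; ring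
  have h2 : ‖(cauchyPowerSeries f c 1) p (fun _ => (1:ℂ))‖ ≤ M := by
    calc ‖(cauchyPowerSeries f c 1) p (fun _ => (1:ℂ))‖
        ≤ ‖cauchyPowerSeries f c 1 p‖ * ∏ _i : Fin p, ‖(1:ℂ)‖ :=
          (cauchyPowerSeries f c 1 p).le_opNorm _
      _ = ‖cauchyPowerSeries f c 1 p‖ := by simp
      _ ≤ ((2 * Real.pi)⁻¹ * ∫ θ : ℝ in (0)..2 * Real.pi, ‖f (circleMap c 1 θ)‖) * |(1:ℝ)|⁻¹ ^ p :=
          norm_cauchyPowerSeries_le f c 1 p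
      _ ≤ M := by
          simp only [abs_one, inv_one, one_pow, mul_one]
          calc (2 * Real.pi)⁻¹ * ∫ θ : ℝ in (0)..2 * Real.pi, ‖f (circleMap c 1 θ)‖
              ≤ (2 * Real.pi)⁻¹ * (2 * Real.pi * M) := by
                gcongr
            _ = M := by
                rw [← mul_assoc, inv_mul_cancel₀ Real.two_pi_pos.ne', one_mul]
  rw [h1, ← Nat.cast_smul_eq_nsmul ℂ, smul_eq_mul, norm_mul, Complex.norm_natCast]
  gcongr


lemma gammaProd_differentiable {n : ℕ} (α β : Fin n → ℂ) :
    Differentiable ℂ (gammaProd α β) := by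
  apply Differentiable.mul
  · apply Differentiable.fun_finsetProd
    intro i _
    exact Complex.differentiable_one_div_Gamma.comp
      ((differentiable_id.sub_const (α i)).add_const 1)
  · apply Differentiable.fun_finsetProd
    intro i _
    exact Complex.differentiable_one_div_Gamma.comp
      ((differentiable_id.neg.add_const (β i)).add_const 1)

lemma Gamma_inv_rec (z : ℂ) :
    (Complex.Gamma z)⁻¹ = z * (Complex.Gamma (z + 1))⁻¹ := by
  rcases eq_or_ne z 0 with rfl | hz
  · simp [Complex.Gamma_zero]
  · rw [Complex.Gamma_add_one z hz, mul_inv, ← mul_assoc, mul_inv_cancel₀ hz, one_mul]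

lemma gammaProd_succ {n : ℕ} (α β : Fin n → ℂ) (s : ℂ) (h : ∀ i, s - α i + 1 ≠ 0) :
    gammaProd α β (s + 1)
      = (∏ i, (s - α i + 1))⁻¹ * (∏ i, (β i - s)) * gammaProd α β s := by
  have h1 : ∀ i : Fin n, (Complex.Gamma (s + 1 - α i + 1))⁻¹
      = (s - α i + 1)⁻¹ * (Complex.Gamma (s - α i + 1))⁻¹ := by
    intro i
    have e : s + 1 - α i + 1 = (s - α i + 1) + 1 := by ring
    rw [e, Complex.Gamma_add_one _ (h i), mul_inv]
  have h2 : ∀ i : Fin n, (Complex.Gamma (-(s + 1) + β i + 1))⁻¹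
      = (β i - s) * (Complex.Gamma (-s + β i + 1))⁻¹ := by
    intro i
    have e1 : -(s + 1) + β i + 1 = -s + β i := by ring
    have e2 : (-s + β i) + 1 = -s + β i + 1 := by ring
    rw [e1, Gamma_inv_rec, e2]
    ring_nf
  unfold gammaProd
  simp only [h1, h2, Finset.prod_mul_distrib, ← Finset.prod_inv_distrib]
  ring

lemma summable_aux {n : ℕ} (αc βc : Fin n → ℂ) (ν : ℝ) (p : ℕ) (w : ℂ) (hw : w.re < 0) :
    Summable (fun l : ℕ => iteratedDeriv p
      (fun t => gammaProd αc βc ((l : ℂ) + t) * Complex.exp (((l : ℂ) + t) * w)) (ν : ℂ)) := by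
  have hG : Differentiable ℂ (gammaProd αc βc) := gammaProd_differentiable αc βc
  set c₃ : ℝ := |ν| + 2 + ∑ i, (‖αc i‖ + ‖βc i‖) with hc₃
  have hsum_nn : 0 ≤ ∑ i, (‖αc i‖ + ‖βc i‖) :=
    Finset.sum_nonneg fun i _ => add_nonneg (norm_nonneg _) (norm_nonneg _)
  have hc₃2 : 2 ≤ c₃ := by
    have := abs_nonneg ν; rw [hc₃]; linarith
  have htnorm : ∀ t : ℂ, t ∈ closedBall (ν : ℂ) 1 → ‖t‖ ≤ |ν| + 1 := by
    intro t ht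
    have h1 : ‖t - (ν : ℂ)‖ ≤ 1 := by
      rw [← dist_eq_norm]; exact mem_closedBall.mp ht
    have et : t - (ν : ℂ) + (ν : ℂ) = t := sub_add_cancel _ _
    calc ‖t‖ = ‖(t - (ν : ℂ)) + (ν : ℂ)‖ := by rw [et]
      _ ≤ ‖t - (ν : ℂ)‖ + ‖((ν : ℝ) : ℂ)‖ := norm_add_le _ _
      _ ≤ 1 + |ν| := by
          rw [Complex.norm_real, Real.norm_eq_abs]; linarith
      _ = |ν| + 1 := by ring
  have hαi : ∀ i, ‖αc i‖ ≤ ∑ j, (‖αc j‖ + ‖βc j‖) := by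
    intro i
    calc ‖αc i‖ ≤ ‖αc i‖ + ‖βc i‖ := le_add_of_nonneg_right (norm_nonneg _)
      _ ≤ ∑ j, (‖αc j‖ + ‖βc j‖) := Finset.single_le_sum
          (fun j _ => add_nonneg (norm_nonneg _) (norm_nonneg _)) (Finset.mem_univ i)
  have hβi : ∀ i, ‖βc i‖ ≤ ∑ j, (‖αc j‖ + ‖βc j‖) := by
    intro i
    calc ‖βc i‖ ≤ ‖αc i‖ + ‖βc i‖ := le_add_of_nonneg_left (norm_nonneg _)
      _ ≤ ∑ j, (‖αc j‖ + ‖βc j‖) := Finset.single_le_sum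
          (fun j _ => add_nonneg (norm_nonneg _) (norm_nonneg _)) (Finset.mem_univ i)
  -- the sup of ‖G (l + ·)‖ on the closed unit ball around ν
  set M : ℕ → ℝ := fun l =>
    sSup ((fun t => ‖gammaProd αc βc ((l : ℂ) + t)‖) '' closedBall (ν : ℂ) 1) with hM
  have hcont : ∀ l : ℕ, ContinuousOn (fun t => ‖gammaProd αc βc ((l : ℂ) + t)‖)
      (closedBall (ν : ℂ) 1) := fun l =>
    ((hG.comp ((differentiable_const ((l : ℕ) : ℂ)).add differentiable_id)).continuous.norm).continuousOn
  have hbdd : ∀ l : ℕ, BddAbove ((fun t => ‖gammaProd αc βc ((l : ℂ) + t)‖) '' closedBall (ν : ℂ) 1) :=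
    fun l => ((isCompact_closedBall _ _).image_of_continuousOn (hcont l)).bddAbove
  have hnonem : ∀ l : ℕ, ((fun t => ‖gammaProd αc βc ((l : ℂ) + t)‖) '' closedBall (ν : ℂ) 1).Nonempty :=
    fun l => ⟨_, Set.mem_image_of_mem _ (mem_closedBall_self zero_le_one)⟩
  have hMle : ∀ l : ℕ, ∀ t ∈ closedBall (ν : ℂ) 1, ‖gammaProd αc βc ((l : ℂ) + t)‖ ≤ M l :=
    fun l t ht => le_csSup (hbdd l) (Set.mem_image_of_mem _ ht)
  have hM0 : ∀ l, 0 ≤ M l := fun l =>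
    (norm_nonneg _).trans (hMle l (ν : ℂ) (mem_closedBall_self zero_le_one))
  -- recurrence for M
  have key : ∀ l : ℕ, c₃ + 2 ≤ (l : ℝ) → ∀ t ∈ closedBall (ν : ℂ) 1,
      ‖gammaProd αc βc (((l : ℂ) + t) + 1)‖
        ≤ (((l : ℝ) + c₃) / ((l : ℝ) - c₃)) ^ n * ‖gammaProd αc βc ((l : ℂ) + t)‖ := by
    intro l hl t ht
    set s : ℂ := (l : ℂ) + t with hs
    have hden : ∀ i, (l : ℝ) - c₃ ≤ ‖s - αc i + 1‖ := by
      intro i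
      have h1 : ‖t - αc i + 1‖ ≤ c₃ := by
        calc ‖t - αc i + 1‖ ≤ ‖t‖ + ‖αc i‖ + 1 := by
              calc ‖t - αc i + 1‖ ≤ ‖t - αc i‖ + ‖(1:ℂ)‖ := norm_add_le _ _
                _ ≤ (‖t‖ + ‖αc i‖) + ‖(1:ℂ)‖ := by gcongr; exact norm_sub_le _ _
                _ = ‖t‖ + ‖αc i‖ + 1 := by norm_num
          _ ≤ (|ν| + 1) + ‖αc i‖ + 1 := by gcongr; exact htnorm t ht
          _ ≤ c₃ := by rw [hc₃]; have := hαi i; linarith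
      have h2 : s - αc i + 1 = (l : ℂ) - (-(t - αc i + 1)) := by rw [hs]; ring
      have h3 := norm_sub_norm_le ((l : ℂ)) (-(t - αc i + 1))
      rw [← h2] at h3
      have h4 : ‖((l : ℕ) : ℂ)‖ = (l : ℝ) := by
        simp [Complex.norm_natCast]
      rw [h4, norm_neg] at h3
      linarith
    have hnum : ∀ i, ‖βc i - s‖ ≤ (l : ℝ) + c₃ := by
      intro i
      calc ‖βc i - s‖ ≤ ‖βc i‖ + ‖s‖ := norm_sub_le _ _
        _ ≤ ‖βc i‖ + ((l : ℝ) + ‖t‖) := by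
            gcongr
            calc ‖s‖ ≤ ‖((l:ℕ):ℂ)‖ + ‖t‖ := norm_add_le _ _
              _ = (l : ℝ) + ‖t‖ := by simp [Complex.norm_natCast]
        _ ≤ ‖βc i‖ + ((l : ℝ) + (|ν| + 1)) := by gcongr; exact htnorm t ht
        _ ≤ (l : ℝ) + c₃ := by rw [hc₃]; have := hβi i; linarith
    have hlc : (0:ℝ) < (l : ℝ) - c₃ := by linarith
    have hne : ∀ i, s - αc i + 1 ≠ 0 := by
      intro i h0
      have := hden i
      rw [h0, norm_zero] at this
      linarith
    rw [gammaProd_succ αc βc s hne]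
    rw [norm_mul, norm_mul, norm_inv, norm_prod, norm_prod]
    have hprod_den : ((l : ℝ) - c₃) ^ n ≤ ∏ i, ‖s - αc i + 1‖ := by
      calc ((l : ℝ) - c₃) ^ n = ∏ _i : Fin n, ((l : ℝ) - c₃) := by
            rw [Finset.prod_const, Finset.card_univ, Fintype.card_fin]
        _ ≤ ∏ i, ‖s - αc i + 1‖ :=
            Finset.prod_le_prod (fun i _ => hlc.le) (fun i _ => hden i)
    have hprod_num : ∏ i, ‖βc i - s‖ ≤ ((l : ℝ) + c₃) ^ n := by
      calc ∏ i, ‖βc i - s‖ ≤ ∏ _i : Fin n, ((l : ℝ) + c₃) :=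
            Finset.prod_le_prod (fun i _ => norm_nonneg _) (fun i _ => hnum i)
        _ = ((l : ℝ) + c₃) ^ n := by
            rw [Finset.prod_const, Finset.card_univ, Fintype.card_fin]
    have hinv : (∏ i, ‖s - αc i + 1‖)⁻¹ ≤ (((l : ℝ) - c₃) ^ n)⁻¹ := by
      apply inv_anti₀ (pow_pos hlc n) hprod_den
    calc (∏ i, ‖s - αc i + 1‖)⁻¹ * (∏ i, ‖βc i - s‖) * ‖gammaProd αc βc s‖
        ≤ (((l : ℝ) - c₃) ^ n)⁻¹ * (((l : ℝ) + c₃) ^ n) * ‖gammaProd αc βc s‖ := by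
          apply mul_le_mul_of_nonneg_right _ (norm_nonneg _)
          apply mul_le_mul hinv hprod_num (Finset.prod_nonneg fun i _ => norm_nonneg _)
            (by positivity)
      _ = (((l : ℝ) + c₃) / ((l : ℝ) - c₃)) ^ n * ‖gammaProd αc βc s‖ := by
          rw [div_pow, div_eq_mul_inv]; ring
  have hMrec : ∀ l : ℕ, c₃ + 2 ≤ (l : ℝ) →
      M (l + 1) ≤ (((l : ℝ) + c₃) / ((l : ℝ) - c₃)) ^ n * M l := by
    intro l hl
    apply csSup_le (hnonem (l + 1))
    rintro x ⟨t, ht, rfl⟩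
    have hc : (((l + 1 : ℕ) : ℂ)) + t = ((l : ℂ) + t) + 1 := by push_cast; ring
    show ‖gammaProd αc βc (((l + 1 : ℕ) : ℂ) + t)‖ ≤ _
    rw [hc]
    calc ‖gammaProd αc βc (((l : ℂ) + t) + 1)‖
        ≤ (((l : ℝ) + c₃) / ((l : ℝ) - c₃)) ^ n * ‖gammaProd αc βc ((l : ℂ) + t)‖ :=
          key l hl t ht
      _ ≤ (((l : ℝ) + c₃) / ((l : ℝ) - c₃)) ^ n * M l :=
          mul_le_mul_of_nonneg_left (hMle l t ht)
            (pow_nonneg (div_nonneg (by linarith) (by linarith)) n)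
  -- ratio test
  set ρ : ℝ := Real.exp w.re with hρ
  have hρ0 : 0 < ρ := Real.exp_pos _
  have hρ1 : ρ < 1 := by rw [hρ]; exact Real.exp_lt_one_iff.mpr hw
  set r : ℝ := (1 + ρ) / 2 with hr
  have hr1 : r < 1 := by rw [hr]; linarith
  have hρr : ρ < r := by rw [hr]; linarith
  have hκt : Tendsto (fun l : ℕ => (((l : ℝ) + c₃) / ((l : ℝ) - c₃)) ^ n * ρ) atTop (𝓝 ρ) := by
    have hfrac : Tendsto (fun x : ℝ => (x + c₃) / (x - c₃)) atTop (𝓝 1) := by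
      have h2 : Tendsto (fun x : ℝ => x - c₃) atTop atTop :=
        tendsto_atTop_add_const_right _ _ tendsto_id
      have h3 : Tendsto (fun x : ℝ => (2 * c₃) / (x - c₃)) atTop (𝓝 0) :=
        Tendsto.div_atTop tendsto_const_nhds h2
      have h1 : Tendsto (fun x : ℝ => 1 + (2 * c₃) / (x - c₃)) atTop (𝓝 1) := by
        simpa using tendsto_const_nhds.add h3
      apply h1.congr'
      filter_upwards [eventually_gt_atTop c₃] with x hx
      have hx0 : x - c₃ ≠ 0 := ne_of_gt (by linarith)
      field_simp
      ring
    have hcomp : Tendsto (fun l : ℕ => ((l : ℝ) + c₃) / ((l : ℝ) - c₃)) atTop (𝓝 1) :=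
      hfrac.comp tendsto_natCast_atTop_atTop
    have := (hcomp.pow n).mul_const ρ
    simpa using this
  have hev : ∀ᶠ l : ℕ in atTop, ‖M (l + 1) * ρ ^ (l + 1)‖ ≤ r * ‖M l * ρ ^ l‖ := by
    have hev1 : ∀ᶠ l : ℕ in atTop, (((l : ℝ) + c₃) / ((l : ℝ) - c₃)) ^ n * ρ < r :=
      hκt.eventually_lt_const hρr
    have hev2 : ∀ᶠ l : ℕ in atTop, c₃ + 2 ≤ (l : ℝ) := by
      have := tendsto_natCast_atTop_atTop (R := ℝ)
      exact this.eventually_ge_atTop (c₃ + 2)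
    filter_upwards [hev1, hev2] with l h1 h2
    have hlc : (0:ℝ) < (l : ℝ) - c₃ := by linarith
    have hκ0 : 0 ≤ (((l : ℝ) + c₃) / ((l : ℝ) - c₃)) ^ n := by positivity
    rw [Real.norm_eq_abs, Real.norm_eq_abs,
      _root_.abs_of_nonneg (mul_nonneg (hM0 _) (pow_nonneg hρ0.le _)),
      _root_.abs_of_nonneg (mul_nonneg (hM0 _) (pow_nonneg hρ0.le _))]
    calc M (l + 1) * ρ ^ (l + 1) = (M (l + 1) * ρ) * ρ ^ l := by ring
      _ ≤ (((((l : ℝ) + c₃) / ((l : ℝ) - c₃)) ^ n * M l) * ρ) * ρ ^ l := by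
          gcongr
          exact hMrec l h2
      _ = ((((l : ℝ) + c₃) / ((l : ℝ) - c₃)) ^ n * ρ) * (M l * ρ ^ l) := by ring
      _ ≤ r * (M l * ρ ^ l) :=
          mul_le_mul_of_nonneg_right h1.le (mul_nonneg (hM0 _) (pow_nonneg hρ0.le _))
  have hMsum : Summable (fun l : ℕ => M l * ρ ^ l) :=
    summable_of_ratio_norm_eventually_le hr1 hev
  -- Cauchy estimates
  set C₂ : ℝ := (|ν| + 1) * ‖w‖ with hC₂
  have hterm : ∀ l : ℕ, ‖iteratedDeriv p
      (fun t => gammaProd αc βc ((l : ℂ) + t) * Complex.exp (((l : ℂ) + t) * w)) (ν : ℂ)‖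
      ≤ (p.factorial * Real.exp C₂) * (M l * ρ ^ l) := by
    intro l
    have hfl : Differentiable ℂ
        (fun t => gammaProd αc βc ((l : ℂ) + t) * Complex.exp (((l : ℂ) + t) * w)) := by
      apply Differentiable.mul
      · exact hG.comp ((differentiable_const _).add differentiable_id)
      · exact Complex.differentiable_exp.comp
          (((differentiable_const _).add differentiable_id).mul_const w)
    have hbound : ∀ t ∈ sphere (ν : ℂ) (1:ℝ),
        ‖gammaProd αc βc ((l : ℂ) + t) * Complex.exp (((l : ℂ) + t) * w)‖
          ≤ M l * (Real.exp C₂ * ρ ^ l) := by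
      intro t ht
      have ht' : t ∈ closedBall (ν : ℂ) 1 := sphere_subset_closedBall ht
      rw [norm_mul]
      have hre : ((((l : ℕ) : ℂ) + t) * w).re ≤ (l : ℝ) * w.re + C₂ := by
        have e1 : (((l : ℕ) : ℂ) + t) * w = ((l : ℕ) : ℂ) * w + t * w := by ring
        rw [e1, Complex.add_re]
        have e2 : (((l : ℕ) : ℂ) * w).re = (l : ℝ) * w.re := by
          rw [← Complex.ofReal_natCast, Complex.re_ofReal_mul]
        rw [e2]
        have e3 : (t * w).re ≤ C₂ := by
          calc (t * w).re ≤ ‖t * w‖ := Complex.re_le_norm _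
            _ = ‖t‖ * ‖w‖ := norm_mul _ _
            _ ≤ (|ν| + 1) * ‖w‖ := mul_le_mul_of_nonneg_right (htnorm t ht') (norm_nonneg w)
            _ = C₂ := rfl
        linarith
      have hexpnorm : ‖Complex.exp ((((l : ℕ) : ℂ) + t) * w)‖ ≤ Real.exp C₂ * ρ ^ l := by
        rw [Complex.norm_exp]
        calc Real.exp (((((l : ℕ) : ℂ) + t) * w).re) ≤ Real.exp ((l : ℝ) * w.re + C₂) :=
              Real.exp_le_exp.mpr hre
          _ = Real.exp C₂ * ρ ^ l := by
              rw [Real.exp_add, hρ, ← Real.exp_nat_mul]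
              try ring
      exact mul_le_mul (hMle l t ht') hexpnorm (norm_nonneg _) (hM0 l)
    have h5 := cauchy_est _ hfl (ν : ℂ) p _ hbound
    have h6 : (p.factorial : ℝ) * (M l * (Real.exp C₂ * ρ ^ l))
        = (p.factorial * Real.exp C₂) * (M l * ρ ^ l) := by ring
    rw [h6] at h5
    exact h5
  exact Summable.of_norm_bounded ((hMsum.mul_left (p.factorial * Real.exp C₂))) hterm
lemma my_iteratedDeriv_add {f g : ℂ → ℂ} (hf : Differentiable ℂ f) (hg : Differentiable ℂ g)
    (n : ℕ) (x : ℂ) :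
    iteratedDeriv n (fun t => f t + g t) x = iteratedDeriv n f x + iteratedDeriv n g x := by
  have : (fun t => f t + g t) = f + g := rfl
  rw [this]
  simp only [← iteratedDerivWithin_univ]
  exact iteratedDerivWithin_add (Set.mem_univ x) uniqueDiffOn_univ
    (hf.contDiff.contDiffWithinAt) (hg.contDiff.contDiffWithinAt)

lemma my_iteratedDeriv_const_mul {f : ℂ → ℂ} (hf : Differentiable ℂ f) (c : ℂ) (n : ℕ) (x : ℂ) :
    iteratedDeriv n (fun t => c * f t) x = c * iteratedDeriv n f x := by
  simp only [← iteratedDerivWithin_univ]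
  exact iteratedDerivWithin_const_mul (Set.mem_univ x) uniqueDiffOn_univ c
    (hf.contDiff.contDiffWithinAt)

lemma deriv_of_entire {f : ℂ → ℂ} (hf : Differentiable ℂ f) :
    Differentiable ℂ (deriv f) :=
  (contDiff_infty_iff_deriv.mp hf.contDiff).2.differentiable (by simp)

lemma pascal_sum (R : Type*) [CommRing R] (T : ℕ → R) (r : ℕ) :
    ∑ p ∈ Finset.range (r+2), ((r+1).choose p : R) * T p
      = ∑ p ∈ Finset.range (r+1), (r.choose p : R) * T (p+1)
        + ∑ p ∈ Finset.range (r+1), (r.choose p : R) * T p := by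
  calc ∑ p ∈ Finset.range (r+2), ((r+1).choose p : R) * T p
      = (∑ p ∈ Finset.range (r+1), ((r+1).choose (p+1) : R) * T (p+1))
        + ((r+1).choose 0 : R) * T 0 := Finset.sum_range_succ' _ _
    _ = (∑ p ∈ Finset.range (r+1),
          ((r.choose p : R) * T (p+1) + (r.choose (p+1) : R) * T (p+1))) + T 0 := by
        rw [Nat.choose_zero_right]
        push_cast
        rw [one_mul]
        congr 1
        apply Finset.sum_congr rfl
        intro p _
        rw [Nat.choose_succ_succ r p]
        push_cast
        ring
    _ = (∑ p ∈ Finset.range (r+1), (r.choose p : R) * T (p+1))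
        + ((∑ p ∈ Finset.range (r+1), (r.choose (p+1) : R) * T (p+1))
           + (r.choose 0 : R) * T 0) := by
        rw [Finset.sum_add_distrib, Nat.choose_zero_right]
        push_cast
        ring
    _ = (∑ p ∈ Finset.range (r+1), (r.choose p : R) * T (p+1))
        + ∑ p ∈ Finset.range (r+2), (r.choose p : R) * T p := by
        rw [← Finset.sum_range_succ' (fun p => (r.choose p : R) * T p) (r+1)]
    _ = (∑ p ∈ Finset.range (r+1), (r.choose p : R) * T (p+1))
        + ∑ p ∈ Finset.range (r+1), (r.choose p : R) * T p := by
        rw [Finset.sum_range_succ (fun p => (r.choose p : R) * T p) (r+1)]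
        simp [Nat.choose_succ_self]

/-- Leibniz formula for `iteratedDeriv` of `f t * exp (c * t)`. -/
lemma iteratedDeriv_mul_exp (c : ℂ) (r : ℕ) :
    ∀ (f : ℂ → ℂ), Differentiable ℂ f → ∀ x : ℂ,
    iteratedDeriv r (fun t => f t * Complex.exp (c * t)) x
      = ∑ p ∈ Finset.range (r + 1),
          (r.choose p : ℂ) * c ^ (r - p) * iteratedDeriv p f x * Complex.exp (c * x) := by
  induction r with
  | zero => intro f hf x; simp
  | succ r ih =>
    intro f hf x
    have hd : Differentiable ℂ (deriv f) := deriv_of_entire hf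
    have hexp : ∀ t : ℂ, HasDerivAt (fun t : ℂ => Complex.exp (c * t))
        (c * Complex.exp (c * t)) t := by
      intro t
      have h1 : HasDerivAt (fun t : ℂ => c * t) c t := by
        simpa using (hasDerivAt_id t).const_mul c
      simpa [mul_comm] using h1.cexp
    have hder : deriv (fun t => f t * Complex.exp (c * t))
        = fun t => (deriv f t + c * f t) * Complex.exp (c * t) := by
      funext t
      rw [deriv_fun_mul (hf.differentiableAt) (hexp t).differentiableAt, (hexp t).deriv]
      ring
    rw [iteratedDeriv_succ', hder]
    have hg : Differentiable ℂ (fun t => deriv f t + c * f t) :=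
      hd.add ((differentiable_const c).mul hf)
    rw [ih _ hg x]
    have hsplit : ∀ p, iteratedDeriv p (fun t => deriv f t + c * f t) x
        = iteratedDeriv (p+1) f x + c * iteratedDeriv p f x := by
      intro p
      rw [my_iteratedDeriv_add hd (hf.const_mul c) p x,
        my_iteratedDeriv_const_mul hf c p x, iteratedDeriv_succ']
    simp only [hsplit]
    have key := pascal_sum ℂ (fun p => c ^ (r + 1 - p) * iteratedDeriv p f x
      * Complex.exp (c * x)) r
    have lhs_eq : ∀ p ∈ Finset.range (r+1),
        (r.choose p : ℂ) * c ^ (r - p) * (iteratedDeriv (p+1) f x + c * iteratedDeriv p f x)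
          * Complex.exp (c * x)
        = (r.choose p : ℂ) * (c ^ (r + 1 - (p+1)) * iteratedDeriv (p+1) f x
            * Complex.exp (c * x))
          + (r.choose p : ℂ) * (c ^ (r + 1 - p) * iteratedDeriv p f x * Complex.exp (c * x)) := by
      intro p hp
      have hple : p ≤ r := Nat.lt_succ_iff.mp (Finset.mem_range.mp hp)
      have h1 : r + 1 - (p + 1) = r - p := by omega
      have h2 : r + 1 - p = (r - p) + 1 := by omega
      simp only [h1, h2, pow_succ]
      ring
    rw [Finset.sum_congr rfl lhs_eq, Finset.sum_add_distrib, ← key]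
    apply Finset.sum_congr rfl
    intro p _
    ring

end

lemma monodromy_part1 {n : ℕ} (α β : Fin n → ℝ) (νj : ℝ) (Aj : ℂ)
    (hA : Complex.exp (2 * (π : ℂ) * Complex.I * (νj : ℂ)) = Aj)
    (r : ℕ) (w : ℂ) (hw : w.re < 0) :
    gA α β νj r (w + 2 * (π : ℂ) * Complex.I) =
      Aj * ∑ p ∈ Finset.range (r + 1), (Nat.choose r p : ℂ) * gA α β νj p w := by
  have hG : Differentiable ℂ (gammaProd (fun i => ((α i : ℝ) : ℂ)) (fun i => ((β i : ℝ) : ℂ))) :=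
    gammaProd_differentiable _ _
  set G : ℂ → ℂ := gammaProd (fun i => ((α i : ℝ) : ℂ)) (fun i => ((β i : ℝ) : ℂ)) with hGdef
  have hfl : ∀ (l : ℕ) (w' : ℂ), Differentiable ℂ
      (fun t => G ((l : ℂ) + t) * Complex.exp (((l : ℂ) + t) * w')) := by
    intro l w'
    apply Differentiable.mul
    · exact hG.comp ((differentiable_const _).add differentiable_id)
    · exact Complex.differentiable_exp.comp
        (((differentiable_const _).add differentiable_id).mul_const w')
  have hcne : (2 * (π : ℂ) * Complex.I) ≠ 0 :=
    mul_ne_zero (mul_ne_zero two_ne_zero (Complex.ofReal_ne_zero.mpr Real.pi_ne_zero))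
      Complex.I_ne_zero
  have hFeq : ∀ l : ℕ, (fun t : ℂ => G ((l : ℂ) + t)
        * Complex.exp (((l : ℂ) + t) * (w + 2 * (π : ℂ) * Complex.I)))
      = fun t => (G ((l : ℂ) + t) * Complex.exp (((l : ℂ) + t) * w))
        * Complex.exp ((2 * (π : ℂ) * Complex.I) * t) := by
    intro l
    funext t
    have h1 : ((l : ℂ) + t) * (w + 2 * (π : ℂ) * Complex.I)
        = (((l : ℂ) + t) * w) + ((l : ℕ) : ℂ) * (2 * (π : ℂ) * Complex.I)
          + (2 * (π : ℂ) * Complex.I) * t := by ring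
    rw [h1, Complex.exp_add, Complex.exp_add, Complex.exp_nat_mul_two_pi_mul_I]
    ring
  have step1 : ∀ l : ℕ,
      ((2 * (π : ℂ) * Complex.I) ^ r)⁻¹ * iteratedDeriv r
        (fun t => G ((l : ℂ) + t)
          * Complex.exp (((l : ℂ) + t) * (w + 2 * (π : ℂ) * Complex.I))) (νj : ℂ)
      = ∑ p ∈ Finset.range (r + 1), (Aj * ((Nat.choose r p : ℂ)
          * (((2 * (π : ℂ) * Complex.I) ^ p)⁻¹ * iteratedDeriv p
              (fun t => G ((l : ℂ) + t) * Complex.exp (((l : ℂ) + t) * w)) (νj : ℂ)))) := by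
    intro l
    rw [hFeq l, iteratedDeriv_mul_exp (2 * (π : ℂ) * Complex.I) r _ (hfl l w) (νj : ℂ),
      Finset.mul_sum]
    apply Finset.sum_congr rfl
    intro p hp
    have hpow : ((2 * (π : ℂ) * Complex.I) ^ r)⁻¹ * (2 * (π : ℂ) * Complex.I) ^ (r - p)
        = ((2 * (π : ℂ) * Complex.I) ^ p)⁻¹ := by
      have hple : p ≤ r := Nat.lt_succ_iff.mp (Finset.mem_range.mp hp)
      have hsplit : (2 * (π : ℂ) * Complex.I) ^ (r - p) * (2 * (π : ℂ) * Complex.I) ^ p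
          = (2 * (π : ℂ) * Complex.I) ^ r := by
        rw [← pow_add]
        congr 1
        omega
      have ha : (2 * (π : ℂ) * Complex.I) ^ (r - p) ≠ 0 := pow_ne_zero _ hcne
      rw [← hsplit, mul_inv, mul_right_comm, inv_mul_cancel₀ ha, one_mul]
    have hexpν : Complex.exp ((2 * (π : ℂ) * Complex.I) * (νj : ℂ)) = Aj := hA
    rw [hexpν]
    calc ((2 * (π : ℂ) * Complex.I) ^ r)⁻¹ * ((Nat.choose r p : ℂ)
          * (2 * (π : ℂ) * Complex.I) ^ (r - p)
          * iteratedDeriv p (fun t => G ((l : ℂ) + t) * Complex.exp (((l : ℂ) + t) * w)) (νj : ℂ)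
          * Aj)
        = Aj * ((Nat.choose r p : ℂ)
          * ((((2 * (π : ℂ) * Complex.I) ^ r)⁻¹ * (2 * (π : ℂ) * Complex.I) ^ (r - p))
            * iteratedDeriv p (fun t => G ((l : ℂ) + t)
                * Complex.exp (((l : ℂ) + t) * w)) (νj : ℂ))) := by ring
      _ = Aj * ((Nat.choose r p : ℂ) * (((2 * (π : ℂ) * Complex.I) ^ p)⁻¹
            * iteratedDeriv p (fun t => G ((l : ℂ) + t)
                * Complex.exp (((l : ℂ) + t) * w)) (νj : ℂ))) := by rw [hpow]
  have hsummand : ∀ p ∈ Finset.range (r + 1), Summable (fun l : ℕ =>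
      Aj * ((Nat.choose r p : ℂ) * (((2 * (π : ℂ) * Complex.I) ^ p)⁻¹ * iteratedDeriv p
        (fun t => G ((l : ℂ) + t) * Complex.exp (((l : ℂ) + t) * w)) (νj : ℂ)))) := by
    intro p _
    exact (((summable_aux _ _ νj p w hw).mul_left _).mul_left _).mul_left _
  calc gA α β νj r (w + 2 * (π : ℂ) * Complex.I)
      = ∑' l : ℕ, ((2 * (π : ℂ) * Complex.I) ^ r)⁻¹ * iteratedDeriv r
          (fun t => G ((l : ℂ) + t)
            * Complex.exp (((l : ℂ) + t) * (w + 2 * (π : ℂ) * Complex.I))) (νj : ℂ) := rfl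
    _ = ∑' l : ℕ, ∑ p ∈ Finset.range (r + 1), (Aj * ((Nat.choose r p : ℂ)
          * (((2 * (π : ℂ) * Complex.I) ^ p)⁻¹ * iteratedDeriv p
              (fun t => G ((l : ℂ) + t) * Complex.exp (((l : ℂ) + t) * w)) (νj : ℂ)))) :=
        tsum_congr step1
    _ = ∑ p ∈ Finset.range (r + 1), ∑' l : ℕ, (Aj * ((Nat.choose r p : ℂ)
          * (((2 * (π : ℂ) * Complex.I) ^ p)⁻¹ * iteratedDeriv p
              (fun t => G ((l : ℂ) + t) * Complex.exp (((l : ℂ) + t) * w)) (νj : ℂ)))) :=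
        Summable.tsum_finsetSum hsummand
    _ = ∑ p ∈ Finset.range (r + 1), Aj * ((Nat.choose r p : ℂ) * gA α β νj p w) := by
        apply Finset.sum_congr rfl
        intro p _
        rw [tsum_mul_left, tsum_mul_left]
        rfl
    _ = Aj * ∑ p ∈ Finset.range (r + 1), (Nat.choose r p : ℂ) * gA α β νj p w := by
        rw [Finset.mul_sum]


/-- For real tuples `α, β`, the local solutions `g_{Aⱼ,r}` at `0` transform
under `w ↦ w + 2πi` (one counterclockwise loop around `0`) by
`g_{Aⱼ,r}(w + 2πi) = Aⱼ · Σ_{p=0}^r C(r,p) g_{Aⱼ,p}(w)`; consequently, in the basis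
`S_{Aⱼ,r}` the local monodromy around `0` is the transposed block-diagonal matrix
`D_{A,m_A}^t`, i.e. `g_p(w + 2πi) = Σ_q D_{p,q} g_q(w)` for the matrix `D = D_{A,m_A}` with
entries `D_{(j,r),(j',r')} = C(r,r')·Aⱼ` if `j = j'` and `r' ≤ r`, and `0` otherwise. -/
theorem monodromy_at_zero (n nA : ℕ) (α β : Fin n → ℝ)
    (A : Fin nA → ℂ) (hinj : Function.Injective A)
    (hval : ∀ j, ∃ i, Complex.exp (2 * (π : ℂ) * Complex.I * (α i : ℂ)) = A j)
    (hsurj : ∀ i, ∃ j, Complex.exp (2 * (π : ℂ) * Complex.I * (α i : ℂ)) = A j)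
    (m : Fin nA → ℕ)
    (hm : ∀ j, m j =
      Nat.card {i : Fin n // Complex.exp (2 * (π : ℂ) * Complex.I * (α i : ℂ)) = A j})
    (hn : ∑ j, m j = n)
    (ν : Fin nA → ℝ)
    (hν₁ : ∀ j, ∃ i, α i = ν j ∧ Complex.exp (2 * (π : ℂ) * Complex.I * (α i : ℂ)) = A j)
    (hν₂ : ∀ j i, Complex.exp (2 * (π : ℂ) * Complex.I * (α i : ℂ)) = A j → ν j ≤ α i)
    (D : Matrix (Σ j : Fin nA, Fin (m j)) (Σ j : Fin nA, Fin (m j)) ℂ)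
    (hD : ∀ p q : Σ j : Fin nA, Fin (m j),
      D p q = if p.1 = q.1 ∧ (q.2 : ℕ) ≤ (p.2 : ℕ)
        then (Nat.choose (p.2 : ℕ) (q.2 : ℕ) : ℂ) * A p.1 else 0) :
    (∀ j : Fin nA, ∀ r : ℕ, r < m j → ∀ w : ℂ, w.re < 0 →
      gA α β (ν j) r (w + 2 * (π : ℂ) * Complex.I) =
        A j * ∑ p ∈ Finset.range (r + 1), (Nat.choose r p : ℂ) * gA α β (ν j) p w) ∧
    (∀ p : Σ j : Fin nA, Fin (m j), ∀ w : ℂ, w.re < 0 →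
      gA α β (ν p.1) (p.2 : ℕ) (w + 2 * (π : ℂ) * Complex.I) =
        ∑ q : Σ j : Fin nA, Fin (m j), D p q * gA α β (ν q.1) (q.2 : ℕ) w) := by
  have part1 : ∀ j : Fin nA, ∀ r : ℕ, ∀ w : ℂ, w.re < 0 →
      gA α β (ν j) r (w + 2 * (π : ℂ) * Complex.I) =
        A j * ∑ p ∈ Finset.range (r + 1), (Nat.choose r p : ℂ) * gA α β (ν j) p w := by
    intro j r w hw
    obtain ⟨i, hi1, hi2⟩ := hν₁ j
    have hA : Complex.exp (2 * (π : ℂ) * Complex.I * ((ν j : ℝ) : ℂ)) = A j := by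
      rw [← hi1]
      exact hi2
    exact monodromy_part1 α β (ν j) (A j) hA r w hw
  constructor
  · intro j r _ w hw
    exact part1 j r w hw
  · rintro ⟨j, k⟩ w hw
    have hrhs : ∑ q : Σ j' : Fin nA, Fin (m j'), D ⟨j, k⟩ q * gA α β (ν q.1) (q.2 : ℕ) w
        = A j * ∑ p ∈ Finset.range ((k : ℕ) + 1),
            (Nat.choose (k : ℕ) p : ℂ) * gA α β (ν j) p w := by
      rw [← Finset.univ_sigma_univ, Finset.sum_sigma]
      rw [Finset.sum_eq_single j]
      · have hstep : ∀ k' : Fin (m j), D ⟨j, k⟩ ⟨j, k'⟩ * gA α β (ν j) (k' : ℕ) w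
            = (if (k' : ℕ) ≤ (k : ℕ) then (Nat.choose (k : ℕ) (k' : ℕ) : ℂ) * A j else 0)
              * gA α β (ν j) (k' : ℕ) w := by
          intro k'
          rw [hD]
          simp
        calc ∑ k' : Fin (m j), D ⟨j, k⟩ ⟨j, k'⟩ * gA α β (ν j) (k' : ℕ) w
            = ∑ k' : Fin (m j),
              (if (k' : ℕ) ≤ (k : ℕ) then (Nat.choose (k : ℕ) (k' : ℕ) : ℂ) * A j else 0)
                * gA α β (ν j) (k' : ℕ) w := Finset.sum_congr rfl fun k' _ => hstep k'
          _ = ∑ q ∈ Finset.range (m j),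
              (if q ≤ (k : ℕ) then (Nat.choose (k : ℕ) q : ℂ) * A j else 0)
                * gA α β (ν j) q w := by
              rw [Finset.sum_range fun q =>
                (if q ≤ (k : ℕ) then (Nat.choose (k : ℕ) q : ℂ) * A j else 0)
                  * gA α β (ν j) q w]
          _ = ∑ q ∈ Finset.range ((k : ℕ) + 1),
              (if q ≤ (k : ℕ) then (Nat.choose (k : ℕ) q : ℂ) * A j else 0)
                * gA α β (ν j) q w := by
              apply (Finset.sum_subset ?_ ?_).symm
              · intro q hq
                rw [Finset.mem_range] at hq ⊢
                omega
              · intro q _ hq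
                rw [Finset.mem_range] at hq
                have : ¬ q ≤ (k : ℕ) := by omega
                rw [if_neg this, zero_mul]
          _ = A j * ∑ p ∈ Finset.range ((k : ℕ) + 1),
              (Nat.choose (k : ℕ) p : ℂ) * gA α β (ν j) p w := by
              rw [Finset.mul_sum]
              apply Finset.sum_congr rfl
              intro q hq
              rw [Finset.mem_range] at hq
              rw [if_pos (by omega : q ≤ (k : ℕ))]
              ring
      · intro j' _ hj'
        apply Finset.sum_eq_zero
        intro k' _
        rw [hD]
        rw [if_neg]
        · exact zero_mul _
        · rintro ⟨h1, -⟩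
          exact hj' h1.symm
      · intro h
        exact absurd (Finset.mem_univ j) h
    rw [hrhs]
    exact part1 j (k : ℕ) w hw
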